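/- Let n ≥ 1, r₀ > 0, and let μ be a finite Borel measure on ℝ^n such that, for some A > 0, α ∈ [0, n], and p > max{1, n − α}, one has ∫_{ℝ^n} μ(B(z,s))^{1/(p-1)} dμ(z) ≤ A^{1/(p-1)} · s^{α/(p-1)} · μ(ℝ^n) for all s ∈ (0, 2r₀) (closed balls). Then for every Borel measurable f : ℝ^n → [0,∞] and every r ∈ (0, r₀): ∫_{B(0,r)} ∫_0^1 ∫_{ℝ^n} f(z + t·x) dμ(z) dt dx ≤ (2^{α/p}·A^{1/p}·p/(p − n + α)) · r^{α/p} · [Leb(B(0,r))·μ(ℝ^n)]^{(p-1)/p} · ‖f‖_{L^p(Ω)}, where Ω = N(spt μ, r) is the closed r-neighborhood of the support of μ and the outer integral in x is with respect to Lebesgue measure on B(0,r). -/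

import Mathlib

open MeasureTheory Set Metric
open scoped ENNReal


def msupport {X : Type*} [TopologicalSpace X] [MeasurableSpace X] (μ : Measure X) :
    Set X :=
  {x | ∀ U : Set X, IsOpen U → x ∈ U → 0 < μ U}

lemma msupport_compl_null {X : Type*} [TopologicalSpace X]
    [SecondCountableTopology X] [MeasurableSpace X] (μ : Measure X) :
    μ (msupport μ)ᶜ = 0 := by
  have h : ∀ x : {y : X // y ∈ (msupport μ)ᶜ}, ∃ U : Set X, IsOpen U ∧ (x : X) ∈ U ∧ μ U = 0 := by
    rintro ⟨x, hx⟩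
    simp only [mem_compl_iff, msupport, mem_setOf_eq, not_forall] at hx
    obtain ⟨U, hUo, hxU, hU⟩ := hx
    exact ⟨U, hUo, hxU, by simpa using hU⟩
  choose U hUo hxU hU0 using h
  obtain ⟨T, hTc, hTU⟩ := TopologicalSpace.isOpen_iUnion_countable U hUo
  have hsub : (msupport μ)ᶜ ⊆ ⋃ i ∈ T, U i := by
    rw [hTU]
    exact fun x hx => mem_iUnion.2 ⟨⟨x, hx⟩, hxU _⟩
  exact measure_mono_null hsub ((measure_biUnion_null_iff hTc).2 fun i _ => hU0 i)

lemma measurable_measure_cball {n : ℕ} (μ : Measure (EuclideanSpace ℝ (Fin n)))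
    [IsFiniteMeasure μ] (s : ℝ) :
    Measurable fun y : EuclideanSpace ℝ (Fin n) => μ (closedBall y s) := by
  set S : Set (EuclideanSpace ℝ (Fin n) × EuclideanSpace ℝ (Fin n)) :=
    {q | dist q.2 q.1 ≤ s} with hSdef
  have hS : MeasurableSet S :=
    (isClosed_le (continuous_dist.comp (continuous_snd.prodMk continuous_fst))
      continuous_const).measurableSet
  have h := Measurable.lintegral_prod_right' (ν := μ)
    (f := S.indicator (fun _ => (1 : ℝ≥0∞))) ((measurable_const).indicator hS)
  have heq : ∀ y : EuclideanSpace ℝ (Fin n),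
      (∫⁻ z, S.indicator (fun _ => (1 : ℝ≥0∞)) (y, z) ∂μ) = μ (closedBall y s) := by
    intro y
    have h2 : ∀ z, S.indicator (fun _ => (1 : ℝ≥0∞)) (y, z)
        = (closedBall y s).indicator (fun _ => (1 : ℝ≥0∞)) z := by
      intro z
      by_cases hz : dist z y ≤ s
      · rw [indicator_of_mem (by simpa [hSdef] using hz), indicator_of_mem (by simpa using hz)]
      · rw [indicator_of_notMem (by simpa [hSdef] using hz),
          indicator_of_notMem (by simpa using hz)]
    simp_rw [h2]
    rw [lintegral_indicator measurableSet_closedBall]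
    simp
  simpa only [funext heq] using h
section CoV
variable {n : ℕ}
local notation "E" => EuclideanSpace ℝ (Fin n)




lemma cov_lemma (f : EuclideanSpace ℝ (Fin n) → ℝ≥0∞)
    (hf : Measurable f) (z : EuclideanSpace ℝ (Fin n)) {t r : ℝ} (ht : 0 < t) (hr : 0 < r) :
    (∫⁻ x in closedBall (0 : EuclideanSpace ℝ (Fin n)) r, f (z + t • x) ∂volume)
      = ENNReal.ofReal ((t ^ n)⁻¹) * ∫⁻ y in closedBall z (t * r), f y ∂volume := by
  have hmap : Measure.map (fun x : E => z + t • x) volume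
      = ENNReal.ofReal ((t ^ n)⁻¹) • volume := by
    have h1 : (fun x : E => z + t • x) = (fun y : E => z + y) ∘ (fun x : E => t • x) := rfl
    rw [h1, ← Measure.map_map (measurable_const_add z) (measurable_const_smul t),
      Measure.map_addHaar_smul volume ht.ne', Measure.map_smul,
      map_add_left_eq_self volume z, finrank_euclideanSpace_fin,
      abs_of_pos (by positivity)]
  have hind : ∀ x : E, (closedBall z (t * r)).indicator f (z + t • x)
      = (closedBall (0 : E) r).indicator (fun x => f (z + t • x)) x := by
    intro x
    have hmem : z + t • x ∈ closedBall z (t * r) ↔ x ∈ closedBall (0 : E) r := by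
      rw [mem_closedBall, mem_closedBall, dist_self_add_left, dist_zero_right,
        norm_smul, Real.norm_eq_abs, abs_of_pos ht]
      exact (mul_le_mul_iff_right₀ ht)
    by_cases hx : x ∈ closedBall (0 : E) r
    · rw [Set.indicator_of_mem (hmem.2 hx), Set.indicator_of_mem hx]
    · rw [Set.indicator_of_notMem (fun h => hx (hmem.1 h)), Set.indicator_of_notMem hx]
  calc (∫⁻ x in closedBall (0 : E) r, f (z + t • x) ∂volume)
      = ∫⁻ x, (closedBall (0 : E) r).indicator (fun x => f (z + t • x)) x ∂volume := by
        rw [lintegral_indicator measurableSet_closedBall]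
    _ = ∫⁻ x, (closedBall z (t * r)).indicator f (z + t • x) ∂volume := by
        simp_rw [hind]
    _ = ∫⁻ y, (closedBall z (t * r)).indicator f y
          ∂(Measure.map (fun x : E => z + t • x) volume) := by
        have hφ : Measurable fun x : E => z + t • x := by
          exact (measurable_const_smul t).const_add z
        rw [lintegral_map (hf.indicator measurableSet_closedBall) hφ]
    _ = ENNReal.ofReal ((t ^ n)⁻¹) * ∫⁻ y in closedBall z (t * r), f y ∂volume := by
        rw [hmap, lintegral_smul_measure, lintegral_indicator measurableSet_closedBall, smul_eq_mul]
end CoV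


lemma real_alg {t r A α p : ℝ} (n : ℕ) (ht : 0 < t) (hr : 0 < r) (hA : 0 < A)
    (hp : 1 < p) :
    (t ^ n)⁻¹ * ((t ^ n) * A ^ (1/(p-1)) * (2*(t*r)) ^ (α/(p-1))) ^ ((p-1)/p)
      = t ^ ((α - n)/p) * (A ^ (1/p) * (2*r) ^ (α/p)) := by
  have hp0 : (0:ℝ) < p := by linarith
  have hp1 : p - 1 ≠ 0 := by intro h; linarith [h]
  have h2tr : (0:ℝ) < 2*(t*r) := by positivity
  have key : ∀ x : ℝ, 0 < x → Real.log x = Real.log x := fun _ _ => rfl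
  have hL : (0:ℝ) < (t ^ n)⁻¹ * ((t ^ n) * A ^ (1/(p-1)) * (2*(t*r)) ^ (α/(p-1))) ^ ((p-1)/p) := by
    positivity
  have hR : (0:ℝ) < t ^ ((α - n)/p) * (A ^ (1/p) * (2*r) ^ (α/p)) := by positivity
  have hlog : Real.log ((t ^ n)⁻¹ * ((t ^ n) * A ^ (1/(p-1)) * (2*(t*r)) ^ (α/(p-1))) ^ ((p-1)/p))
      = Real.log (t ^ ((α - n)/p) * (A ^ (1/p) * (2*r) ^ (α/p))) := by
    rw [Real.log_mul (by positivity) (by positivity), Real.log_inv,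
      Real.log_rpow (by positivity),
      Real.log_mul (by positivity) (by positivity),
      Real.log_mul (by positivity) (by positivity),
      Real.log_rpow hA, Real.log_rpow h2tr]
    have e1 : (t:ℝ) ^ ((α - n)/p) ≠ 0 := by positivity
    have e2 : (A:ℝ) ^ (1/p) * (2*r) ^ (α/p) ≠ 0 := by positivity
    have e3 : (A:ℝ) ^ (1/p) ≠ 0 := by positivity
    have e4 : ((2:ℝ)*r) ^ (α/p) ≠ 0 := by positivity
    conv_rhs => rw [Real.log_mul e1 e2, Real.log_rpow ht, Real.log_mul e3 e4,
      Real.log_rpow hA, Real.log_rpow (by positivity : (0:ℝ) < 2*r)]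
    rw [Real.log_mul two_ne_zero (by positivity : t*r ≠ 0), Real.log_mul ht.ne' hr.ne',
      Real.log_pow, Real.log_mul two_ne_zero hr.ne']
    field_simp
    ring
  calc (t ^ n)⁻¹ * ((t ^ n) * A ^ (1/(p-1)) * (2*(t*r)) ^ (α/(p-1))) ^ ((p-1)/p)
      = Real.exp (Real.log ((t ^ n)⁻¹ * ((t ^ n) * A ^ (1/(p-1)) * (2*(t*r)) ^ (α/(p-1))) ^ ((p-1)/p))) := (Real.exp_log hL).symm
    _ = Real.exp (Real.log (t ^ ((α - n)/p) * (A ^ (1/p) * (2*r) ^ (α/p)))) := by rw [hlog]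
    _ = t ^ ((α - n)/p) * (A ^ (1/p) * (2*r) ^ (α/p)) := Real.exp_log hR
section Holder
variable {n : ℕ}

local notation "E" => EuclideanSpace ℝ (Fin n)

lemma holder_bound (μ : Measure (EuclideanSpace ℝ (Fin n))) [IsFiniteMeasure μ]
    {p : ℝ} (hp1 : 1 < p)
    (f : EuclideanSpace ℝ (Fin n) → ℝ≥0∞) (hf : Measurable f)
    {r s : ℝ} (hr : 0 < r) (hs : 0 < s) (hsr : s ≤ r) :
    (∫⁻ y, f y * μ (closedBall y s) ∂volume) ≤
      (∫⁻ x in cthickening r (msupport μ), f x ^ p ∂volume) ^ (1/p) *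
      (volume (closedBall (0 : EuclideanSpace ℝ (Fin n)) s) *
        ∫⁻ z, μ (closedBall z (2*s)) ^ (1/(p-1)) ∂μ) ^ ((p-1)/p) := by
  have hp0 : (0:ℝ) < p := by linarith
  have hp1' : p - 1 ≠ 0 := by intro h; linarith
  have h1p : (0:ℝ) ≤ 1/(p-1) := by apply div_nonneg <;> linarith
  have hep : (0:ℝ) ≤ (p-1)/p := by apply div_nonneg <;> linarith
  set Ω : Set E := cthickening r (msupport μ) with hΩdef
  have hΩm : MeasurableSet Ω := isClosed_cthickening.measurableSet
  -- Step 1: the integrand vanishes off Ω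
  have hvan : ∀ y : E, y ∉ Ω → μ (closedBall y s) = 0 := by
    intro y hy
    refine measure_mono_null (fun w hw => ?_) (msupport_compl_null μ)
    intro hwS
    apply hy
    rw [hΩdef, mem_cthickening_iff]
    calc EMetric.infEdist y (msupport μ) ≤ edist y w := EMetric.infEdist_le_edist_of_mem hwS
      _ = ENNReal.ofReal (dist y w) := edist_dist y w
      _ ≤ ENNReal.ofReal r := by
          apply ENNReal.ofReal_le_ofReal
          calc dist y w = dist w y := dist_comm y w
            _ ≤ s := hw
            _ ≤ r := hsr
  have hrestrict : (∫⁻ y, f y * μ (closedBall y s) ∂volume)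
      = ∫⁻ y in Ω, f y * μ (closedBall y s) ∂volume := by
    rw [← lintegral_indicator hΩm]
    congr 1
    funext y
    by_cases hy : y ∈ Ω
    · rw [Set.indicator_of_mem hy]
    · rw [Set.indicator_of_notMem hy, hvan y hy, mul_zero]
  -- Step 2: Hölder
  have hconj : Real.HolderConjugate p (p/(p-1)) := Real.HolderConjugate.conjExponent hp1
  have hholder := ENNReal.lintegral_mul_le_Lp_mul_Lq (volume.restrict Ω) hconj
    hf.aemeasurable (measurable_measure_cball μ s).aemeasurable
  have hq : 1 / (p/(p-1)) = (p-1)/p := one_div_div _ _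
  -- Step 3: bound the second factor
  have hkey : (∫⁻ y in Ω, μ (closedBall y s) ^ (p/(p-1)) ∂volume) ≤
      volume (closedBall (0 : E) s) * ∫⁻ z, μ (closedBall z (2*s)) ^ (1/(p-1)) ∂μ := by
    have hsplit : ∀ y : E, μ (closedBall y s) ^ (p/(p-1))
        = μ (closedBall y s) ^ (1/(p-1)) * μ (closedBall y s) := by
      intro y
      have : p/(p-1) = 1/(p-1) + 1 := by field_simp; ring
      rw [this, ENNReal.rpow_add_of_nonneg _ _ h1p zero_le_one, ENNReal.rpow_one]
    set S : Set (E × E) := {q | dist q.2 q.1 ≤ s} with hSdef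
    have hSm : MeasurableSet S :=
      (isClosed_le (continuous_dist.comp (continuous_snd.prodMk continuous_fst))
        continuous_const).measurableSet
    set G : E × E → ℝ≥0∞ :=
      fun q => μ (closedBall q.1 s) ^ (1/(p-1)) * S.indicator (fun _ => (1:ℝ≥0∞)) q with hGdef
    have hGm : Measurable G :=
      (((measurable_measure_cball μ s).comp measurable_fst).pow_const _).mul
        (measurable_const.indicator hSm)
    have hinner : ∀ y : E, (∫⁻ z, G (y, z) ∂μ)
        = μ (closedBall y s) ^ (1/(p-1)) * μ (closedBall y s) := by
      intro y
      rw [hGdef]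
      simp only
      rw [lintegral_const_mul' _ _ (ENNReal.rpow_ne_top_of_nonneg h1p
        (measure_ne_top μ _))]
      congr 1
      have h2 : ∀ z : E, S.indicator (fun _ => (1:ℝ≥0∞)) (y, z)
          = (closedBall y s).indicator (fun _ => (1:ℝ≥0∞)) z := by
        intro z
        by_cases hz : dist z y ≤ s
        · rw [Set.indicator_of_mem (by simpa [hSdef] using hz),
            Set.indicator_of_mem (by simpa using hz)]
        · rw [Set.indicator_of_notMem (by simpa [hSdef] using hz),
            Set.indicator_of_notMem (by simpa using hz)]
      simp_rw [h2]
      rw [lintegral_indicator measurableSet_closedBall]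
      simp
    calc (∫⁻ y in Ω, μ (closedBall y s) ^ (p/(p-1)) ∂volume)
        ≤ ∫⁻ y, μ (closedBall y s) ^ (p/(p-1)) ∂volume :=
          setLIntegral_le_lintegral _ _
      _ = ∫⁻ y, ∫⁻ z, G (y, z) ∂μ ∂volume := by
          simp_rw [hinner, hsplit]
      _ = ∫⁻ z, ∫⁻ y, G (y, z) ∂volume ∂μ := by
          apply lintegral_lintegral_swap
          exact hGm.aemeasurable
      _ ≤ ∫⁻ z, ∫⁻ y, μ (closedBall z (2*s)) ^ (1/(p-1)) *
            (closedBall z s).indicator (fun _ => (1:ℝ≥0∞)) y ∂volume ∂μ := by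
          apply lintegral_mono
          intro z
          apply lintegral_mono
          intro y
          rw [hGdef]
          simp only
          by_cases hyz : dist z y ≤ s
          · rw [Set.indicator_of_mem (by simpa [hSdef] using hyz),
              Set.indicator_of_mem (by simpa [dist_comm] using hyz), mul_one, mul_one]
            apply ENNReal.rpow_le_rpow _ h1p
            apply measure_mono
            intro w hw
            rw [mem_closedBall] at hw ⊢
            calc dist w z ≤ dist w y + dist y z := dist_triangle w y z
              _ ≤ s + s := add_le_add hw (by rwa [dist_comm])
              _ = 2*s := by ring
          · rw [Set.indicator_of_notMem (by simpa [hSdef] using hyz),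
              Set.indicator_of_notMem (by simpa [dist_comm] using hyz), mul_zero, mul_zero]
      _ = ∫⁻ z, μ (closedBall z (2*s)) ^ (1/(p-1)) * volume (closedBall z s) ∂μ := by
          congr 1
          funext z
          rw [lintegral_const_mul' _ _ (ENNReal.rpow_ne_top_of_nonneg h1p
            (measure_ne_top μ _)), lintegral_indicator measurableSet_closedBall]
          simp
      _ = volume (closedBall (0 : E) s) * ∫⁻ z, μ (closedBall z (2*s)) ^ (1/(p-1)) ∂μ := by
          simp_rw [fun z : E => Measure.addHaar_closedBall_center volume z s]
          rw [lintegral_mul_const' _ _ measure_closedBall_lt_top.ne, mul_comm]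
  -- Combine
  calc (∫⁻ y, f y * μ (closedBall y s) ∂volume)
      = ∫⁻ y in Ω, f y * μ (closedBall y s) ∂volume := hrestrict
    _ ≤ (∫⁻ y in Ω, f y ^ p ∂volume) ^ (1/p) *
        (∫⁻ y in Ω, μ (closedBall y s) ^ (p/(p-1)) ∂volume) ^ (1/(p/(p-1))) := hholder
    _ ≤ (∫⁻ y in Ω, f y ^ p ∂volume) ^ (1/p) *
        (volume (closedBall (0 : E) s) *
          ∫⁻ z, μ (closedBall z (2*s)) ^ (1/(p-1)) ∂μ) ^ ((p-1)/p) := by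
        rw [hq]
        exact mul_le_mul_right (ENNReal.rpow_le_rpow hkey hep) _
end Holder


/-- Let `μ` be a finite Borel measure on `ℝ^n` satisfying the weak
growth condition `∫ μ(B(z,s))^{1/(p-1)} dμ(z) ≤ A^{1/(p-1)} · s^{α/(p-1)} · μ(ℝ^n)`
for all `s ∈ (0, 2r₀)` (closed balls), where `0 ≤ α ≤ n` and `p > max{1, n-α}`.
Then for every Borel `f : ℝ^n → [0,∞]` and every `r ∈ (0, r₀)`:
`∫_{B(0,r)} ∫_0^1 ∫ f(z + t·x) dμ(z) dt dx
  ≤ (2^{α/p}·A^{1/p}·p/(p-n+α)) · r^{α/p} · [Leb(B(0,r))·μ(ℝ^n)]^{(p-1)/p}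
      · ‖f‖_{L^p(N(spt μ, r))}`. -/
theorem stmt4 (n : ℕ) (hn : 1 ≤ n) (r₀ : ℝ) (hr₀ : 0 < r₀)
    (μ : Measure (EuclideanSpace ℝ (Fin n))) [IsFiniteMeasure μ]
    (A α p : ℝ) (hA : 0 < A) (hα0 : 0 ≤ α) (hαn : α ≤ n)
    (hp : max 1 ((n : ℝ) - α) < p)
    (hgrowth : ∀ s : ℝ, 0 < s → s < 2 * r₀ →
      (∫⁻ z, μ (closedBall z s) ^ (1 / (p - 1)) ∂μ) ≤
        ENNReal.ofReal (A ^ (1 / (p - 1)) * s ^ (α / (p - 1))) * μ univ)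
    (f : EuclideanSpace ℝ (Fin n) → ℝ≥0∞) (hf : Measurable f)
    (r : ℝ) (hr : 0 < r) (hrr₀ : r < r₀) :
    (∫⁻ x in closedBall (0 : EuclideanSpace ℝ (Fin n)) r,
        ∫⁻ t in Icc (0 : ℝ) 1, ∫⁻ z, f (z + t • x) ∂μ ∂volume ∂volume) ≤
      ENNReal.ofReal (2 ^ (α / p) * A ^ (1 / p) * p / (p - n + α) * r ^ (α / p)) *
        (volume (closedBall (0 : EuclideanSpace ℝ (Fin n)) r) * μ univ) ^ ((p - 1) / p) *
        (∫⁻ x in cthickening r (msupport μ), f x ^ p ∂volume) ^ (1 / p) := by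
  have hp1 : (1:ℝ) < p := lt_of_le_of_lt (le_max_left _ _) hp
  have hpna : (n:ℝ) - α < p := lt_of_le_of_lt (le_max_right _ _) hp
  have hp0 : (0:ℝ) < p := by linarith
  have hpn : (0:ℝ) < p - n + α := by linarith
  set B : Set (EuclideanSpace ℝ (Fin n)) := closedBall 0 r with hBdef
  set Ω : Set (EuclideanSpace ℝ (Fin n)) := cthickening r (msupport μ) with hΩdef
  set F : ℝ≥0∞ := (∫⁻ x in Ω, f x ^ p ∂volume) ^ (1/p) with hFdef
  set V : ℝ≥0∞ := volume B with hVdef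
  set Mu : ℝ≥0∞ := μ univ with hMudef
  set e : ℝ := (p-1)/p with hedef
  have hee : (0:ℝ) ≤ e := by rw [hedef]; apply div_nonneg <;> linarith
  set C : ℝ≥0∞ := ENNReal.ofReal (A^(1/p) * (2*r)^(α/p)) * ((V * Mu) ^ e * F) with hCdef
  -- measurability of the big integrand
  have hψ : Measurable fun q : (EuclideanSpace ℝ (Fin n) × ℝ) × EuclideanSpace ℝ (Fin n) =>
      f (q.2 + q.1.2 • q.1.1) :=
    hf.comp (continuous_snd.add ((continuous_fst.snd).smul (continuous_fst.fst))).measurable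
  have hΦ : Measurable fun q : EuclideanSpace ℝ (Fin n) × ℝ =>
      ∫⁻ z, f (z + q.2 • q.1) ∂μ :=
    Measurable.lintegral_prod_right' hψ
  -- swap x and t
  have hswap1 : (∫⁻ x in B, ∫⁻ t in Icc (0:ℝ) 1, ∫⁻ z, f (z + t • x) ∂μ ∂volume ∂volume)
      = ∫⁻ t in Icc (0:ℝ) 1, ∫⁻ x in B, ∫⁻ z, f (z + t • x) ∂μ ∂volume ∂volume :=
    lintegral_lintegral_swap hΦ.aemeasurable
  have hIoc : (∫⁻ t in Icc (0:ℝ) 1, ∫⁻ x in B, ∫⁻ z, f (z + t • x) ∂μ ∂volume ∂volume)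
      = ∫⁻ t in Ioc (0:ℝ) 1, ∫⁻ x in B, ∫⁻ z, f (z + t • x) ∂μ ∂volume ∂volume :=
    (setLIntegral_congr Ioc_ae_eq_Icc).symm
  -- the per-t bound
  have hbound : ∀ t ∈ Ioc (0:ℝ) 1,
      (∫⁻ x in B, ∫⁻ z, f (z + t • x) ∂μ ∂volume)
        ≤ ENNReal.ofReal (t ^ ((α - n)/p)) * C := by
    rintro t ⟨ht, ht1⟩
    have htr : 0 < t * r := mul_pos ht hr
    have htrr : t * r ≤ r := by nlinarith
    -- swap x and z
    have hm2 : Measurable fun q : EuclideanSpace ℝ (Fin n) × EuclideanSpace ℝ (Fin n) =>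
        f (q.2 + t • q.1) :=
      hf.comp (continuous_snd.add ((continuous_fst).const_smul t)).measurable
    have step1 : (∫⁻ x in B, ∫⁻ z, f (z + t • x) ∂μ ∂volume)
        = ∫⁻ z, ∫⁻ x in B, f (z + t • x) ∂volume ∂μ :=
      lintegral_lintegral_swap hm2.aemeasurable
    have step2 : (∫⁻ z, ∫⁻ x in B, f (z + t • x) ∂volume ∂μ)
        = ENNReal.ofReal ((t^n)⁻¹) * ∫⁻ z, ∫⁻ y in closedBall z (t*r), f y ∂volume ∂μ := by
      rw [← lintegral_const_mul' _ _ ENNReal.ofReal_ne_top]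
      exact lintegral_congr fun z => cov_lemma f hf z ht hr
    -- swap z and y
    set S' : Set (EuclideanSpace ℝ (Fin n) × EuclideanSpace ℝ (Fin n)) :=
      {q | dist q.2 q.1 ≤ t*r} with hS'def
    have hS'm : MeasurableSet S' :=
      (isClosed_le (continuous_dist.comp (continuous_snd.prodMk continuous_fst))
        continuous_const).measurableSet
    have hindeq : ∀ z y : EuclideanSpace ℝ (Fin n),
        (closedBall z (t*r)).indicator f y = S'.indicator (fun _ => (1:ℝ≥0∞)) (z, y) * f y := by
      intro z y
      by_cases hy : dist y z ≤ t*r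
      · rw [Set.indicator_of_mem (by simpa using hy),
          Set.indicator_of_mem (by simpa [hS'def] using hy), one_mul]
      · rw [Set.indicator_of_notMem (by simpa using hy),
          Set.indicator_of_notMem (by simpa [hS'def] using hy), zero_mul]
    have step3 : (∫⁻ z, ∫⁻ y in closedBall z (t*r), f y ∂volume ∂μ)
        = ∫⁻ y, f y * μ (closedBall y (t*r)) ∂volume := by
      have e1 : (∫⁻ z, ∫⁻ y in closedBall z (t*r), f y ∂volume ∂μ)
          = ∫⁻ z, ∫⁻ y, S'.indicator (fun _ => (1:ℝ≥0∞)) (z, y) * f y ∂volume ∂μ := by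
        refine lintegral_congr fun z => ?_
        rw [← lintegral_indicator measurableSet_closedBall]
        exact lintegral_congr fun y => hindeq z y
      rw [e1, lintegral_lintegral_swap (((measurable_const.indicator hS'm)).mul
        (hf.comp measurable_snd)).aemeasurable]
      refine lintegral_congr fun y => ?_
      have hma : Measurable fun z : EuclideanSpace ℝ (Fin n) =>
          S'.indicator (fun _ => (1:ℝ≥0∞)) (z, y) :=
        (measurable_const.indicator hS'm).comp (measurable_id.prodMk measurable_const)
      rw [lintegral_mul_const'' _ hma.aemeasurable]
      have e2 : ∀ z : EuclideanSpace ℝ (Fin n), S'.indicator (fun _ => (1:ℝ≥0∞)) (z, y)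
          = (closedBall y (t*r)).indicator (fun _ => (1:ℝ≥0∞)) z := by
        intro z
        by_cases hz : dist z y ≤ t*r
        · rw [Set.indicator_of_mem (by simpa [hS'def, dist_comm] using hz),
            Set.indicator_of_mem (by simpa using hz)]
        · rw [Set.indicator_of_notMem (by simpa [hS'def, dist_comm] using hz),
            Set.indicator_of_notMem (by simpa using hz)]
      simp_rw [e2]
      rw [lintegral_indicator measurableSet_closedBall]
      simp [mul_comm]
    -- Hölder + growth
    have step4 := holder_bound μ hp1 f hf hr htr htrr
    have hgr := hgrowth (2*(t*r)) (by positivity) (by nlinarith)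
    have hvol : volume (closedBall (0 : EuclideanSpace ℝ (Fin n)) (t*r))
        = ENNReal.ofReal (t^n) * V := by
      rw [hVdef, hBdef, Measure.addHaar_closedBall' volume _ (mul_nonneg ht.le hr.le),
        Measure.addHaar_closedBall' volume _ hr.le, finrank_euclideanSpace_fin, mul_pow,
        ENNReal.ofReal_mul (by positivity), mul_assoc]
    have hg0 : (0:ℝ) < A^(1/(p-1)) * (2*(t*r))^(α/(p-1)) := by positivity
    -- assemble
    calc (∫⁻ x in B, ∫⁻ z, f (z + t • x) ∂μ ∂volume)
        = ENNReal.ofReal ((t^n)⁻¹) * ∫⁻ y, f y * μ (closedBall y (t*r)) ∂volume := by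
          rw [step1, step2, step3]
      _ ≤ ENNReal.ofReal ((t^n)⁻¹) * (F *
            (volume (closedBall (0 : EuclideanSpace ℝ (Fin n)) (t*r)) *
              ∫⁻ z, μ (closedBall z (2*(t*r))) ^ (1/(p-1)) ∂μ) ^ e) :=
          mul_le_mul_right step4 _
      _ ≤ ENNReal.ofReal ((t^n)⁻¹) * (F *
            (ENNReal.ofReal (t^n) * V *
              (ENNReal.ofReal (A^(1/(p-1)) * (2*(t*r))^(α/(p-1))) * Mu)) ^ e) := by
          refine mul_le_mul_right (mul_le_mul_right (ENNReal.rpow_le_rpow ?_ hee) _) _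
          rw [hvol]
          exact mul_le_mul_right hgr _
      _ = ENNReal.ofReal (t ^ ((α - n)/p)) * C := by
          rw [mul_mul_mul_comm (ENNReal.ofReal (t^n)) V _ Mu,
            ← ENNReal.ofReal_mul (by positivity),
            ENNReal.mul_rpow_of_nonneg _ _ hee,
            ENNReal.ofReal_rpow_of_pos (by positivity),
            hCdef]
          rw [show t^n * (A^(1/(p-1)) * (2*(t*r))^(α/(p-1)))
              = t^n * A^(1/(p-1)) * (2*(t*r))^(α/(p-1)) by ring]
          calc ENNReal.ofReal ((t^n)⁻¹) *
                (F * (ENNReal.ofReal ((t^n * A^(1/(p-1)) * (2*(t*r))^(α/(p-1)))^e) * (V * Mu)^e))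
              = ENNReal.ofReal ((t^n)⁻¹ * (t^n * A^(1/(p-1)) * (2*(t*r))^(α/(p-1)))^e) *
                  ((V * Mu)^e * F) := by
                rw [ENNReal.ofReal_mul (by positivity : (0:ℝ) ≤ (t^n)⁻¹)]
                ring
            _ = ENNReal.ofReal (t ^ ((α - n)/p) * (A^(1/p) * (2*r)^(α/p))) *
                  ((V * Mu)^e * F) := by
                rw [hedef, real_alg n ht hr hA hp1]
            _ = ENNReal.ofReal (t ^ ((α - n)/p)) *
                  (ENNReal.ofReal (A^(1/p) * (2*r)^(α/p)) * ((V * Mu)^e * F)) := by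
                rw [ENNReal.ofReal_mul (by positivity)]
                ring
  -- integrate the bound in t
  have he1 : (-1:ℝ) < (α - n)/p := by
    rw [lt_div_iff₀ hp0]
    linarith
  have hmeas_t : Measurable fun t : ℝ => ENNReal.ofReal (t ^ ((α - n)/p)) := by
    fun_prop
  have hint : (∫⁻ t in Ioc (0:ℝ) 1, ENNReal.ofReal (t ^ ((α - n)/p)) ∂volume)
      = ENNReal.ofReal (p / (p - n + α)) := by
    have hInt : IntegrableOn (fun t : ℝ => t ^ ((α - n)/p)) (Ioc 0 1) volume := by
      have := intervalIntegral.intervalIntegrable_rpow' (a := (0:ℝ)) (b := 1) he1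
      rwa [intervalIntegrable_iff, uIoc_of_le zero_le_one] at this
    have hae : 0 ≤ᵐ[volume.restrict (Ioc (0:ℝ) 1)] fun t : ℝ => t ^ ((α - n)/p) := by
      filter_upwards [ae_restrict_mem measurableSet_Ioc] with t ht
      exact Real.rpow_nonneg ht.1.le _
    rw [← ofReal_integral_eq_lintegral_ofReal hInt hae,
      ← intervalIntegral.integral_of_le zero_le_one, integral_rpow (Or.inl he1)]
    congr 1
    rw [Real.one_rpow, Real.zero_rpow (ne_of_gt (by linarith : (0:ℝ) < (α - n)/p + 1))]
    rw [show (α - (n:ℝ))/p + 1 = (p - n + α)/p by field_simp; ring]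
    rw [sub_zero, one_div_div]
  calc (∫⁻ x in B, ∫⁻ t in Icc (0:ℝ) 1, ∫⁻ z, f (z + t • x) ∂μ ∂volume ∂volume)
      = ∫⁻ t in Ioc (0:ℝ) 1, ∫⁻ x in B, ∫⁻ z, f (z + t • x) ∂μ ∂volume ∂volume := by
        rw [hswap1, hIoc]
    _ ≤ ∫⁻ t in Ioc (0:ℝ) 1, ENNReal.ofReal (t ^ ((α - n)/p)) * C ∂volume :=
        setLIntegral_mono (hmeas_t.mul_const C) hbound
    _ = ENNReal.ofReal (p / (p - n + α)) * C := by
        rw [lintegral_mul_const'' C hmeas_t.aemeasurable, hint]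
    _ = ENNReal.ofReal (2 ^ (α / p) * A ^ (1 / p) * p / (p - n + α) * r ^ (α / p)) *
          (V * Mu) ^ e * F := by
        have hnonneg : (0:ℝ) ≤ p/(p - n + α) := le_of_lt (div_pos hp0 hpn)
        have hsplit : ENNReal.ofReal (2 ^ (α / p) * A ^ (1 / p) * p / (p - n + α) * r ^ (α / p))
            = ENNReal.ofReal (p/(p - n + α)) * ENNReal.ofReal (A^(1/p) * (2*r)^(α/p)) := by
          rw [← ENNReal.ofReal_mul hnonneg]
          congr 1
          rw [Real.mul_rpow (by norm_num) hr.le]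
          ring
        rw [hCdef, hsplit]
        ring
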